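/- Let μ be a Borel probability measure on G that is inner regular by compact sets and outer regular by open sets, and let K ⊆ G be compact with μ(K) > 0. If μ_-(K) > 0, then there exists δ > 0 such that μ(tK ∩ K) > 0 for all t with ‖t‖ < δ; in particular B_δ ⊆ KK⁻¹, equivalently tK ∩ K ≠ ∅ whenever ‖t‖ < δ. -/

import Mathlib

open Set Topology TopologicalSpace MeasureTheory Filter Pointwise

/-- For a regular Borel probability measure `μ` and compact `K` of positive
measure with `μ₋(K) > 0`, there is `δ > 0` with `μ(tK ∩ K) > 0` for `‖t‖ < δ`;
in particular `B_δ ⊆ KK⁻¹`, equivalently `tK ∩ K ≠ ∅` for `‖t‖ < δ`. -/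
theorem stmt_11 {G : Type*} [Group G] [MetricSpace G] [IsTopologicalGroup G]
    [SeparableSpace G] [MeasurableSpace G] [BorelSpace G]
    (hd : ∀ x y z : G, dist (x * z) (y * z) = dist x y)
    (μ : Measure G) [IsProbabilityMeasure μ] [μ.InnerRegular] [μ.OuterRegular]
    (K : Set G) (hK : IsCompact K) (hμK : 0 < μ K)
    (hsub : 0 < ⨆ (δ : ℝ) (_ : 0 < δ), ⨅ (t : G) (_ : dist (1 : G) t < δ),
      μ ((t * ·) '' K)) :
    ∃ δ > (0 : ℝ),
      (∀ t : G, dist (1 : G) t < δ → 0 < μ ((t * ·) '' K ∩ K)) ∧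
      (∀ t : G, dist (1 : G) t < δ → t ∈ K * K⁻¹) ∧
      (∀ t : G, dist (1 : G) t < δ → ((t * ·) '' K ∩ K).Nonempty) := by
  -- extract δ₀ > 0 with positive infimum c
  rw [lt_iSup_iff] at hsub
  obtain ⟨δ₀, hδ₀⟩ := hsub
  rw [lt_iSup_iff] at hδ₀
  obtain ⟨hδ₀pos, hc⟩ := hδ₀
  set c : ENNReal := ⨅ (t : G) (_ : dist (1 : G) t < δ₀), μ ((t * ·) '' K) with hcdef
  have hcK : ∀ t : G, dist (1 : G) t < δ₀ → c ≤ μ ((t * ·) '' K) := by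
    intro t ht
    exact biInf_le _ ht
  -- open set U ⊇ K with μ U < μ K + c
  have hKlt : μ K < μ K + c :=
    ENNReal.lt_add_right (measure_ne_top μ K) hc.ne'
  obtain ⟨U, hKU, hUopen, hUμ⟩ := K.exists_isOpen_lt_of_lt _ hKlt
  -- thickening of K inside U
  obtain ⟨ε, hεpos, hεsub⟩ := hK.exists_thickening_subset_open hUopen hKU
  refine ⟨min δ₀ ε, lt_min hδ₀pos hεpos, ?_⟩
  have key : ∀ t : G, dist (1 : G) t < min δ₀ ε → 0 < μ ((t * ·) '' K ∩ K) := by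
    intro t ht
    set A : Set G := (t * ·) '' K with hA
    have hAcomp : IsCompact A := hK.image (continuous_mul_left t)
    have hAU : A ⊆ U := by
      refine subset_trans ?_ hεsub
      rintro _ ⟨x, hx, rfl⟩
      rw [Metric.mem_thickening_iff]
      refine ⟨x, hx, ?_⟩
      have : dist (t * x) x = dist t 1 := by
        have := hd t 1 x
        simpa using this
      rw [this, dist_comm]
      exact lt_of_lt_of_le ht (min_le_right _ _)
    have hsum : μ (A ∪ K) + μ (A ∩ K) = μ A + μ K :=
      measure_union_add_inter A hK.measurableSet
    have hcA : c ≤ μ A := hcK t (lt_of_lt_of_le ht (min_le_left _ _))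
    have hlt : μ (A ∪ K) < μ A + μ K := by
      calc μ (A ∪ K) ≤ μ U := measure_mono (union_subset hAU hKU)
        _ < μ K + c := hUμ
        _ ≤ μ K + μ A := add_le_add_right hcA _
        _ = μ A + μ K := add_comm _ _
    by_contra h
    push_neg at h
    have h0 : μ (A ∩ K) = 0 := le_antisymm h zero_le
    rw [h0, add_zero] at hsum
    exact absurd hsum (ne_of_lt hlt)
  refine ⟨key, ?_, ?_⟩
  · intro t ht
    obtain ⟨y, ⟨x, hx, hxy⟩, hyK⟩ :=
      nonempty_of_measure_ne_zero (key t ht).ne'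
    have : t = y * x⁻¹ := by rw [← hxy]; group
    rw [this]
    exact Set.mul_mem_mul hyK (Set.inv_mem_inv.2 hx)
  · intro t ht
    exact nonempty_of_measure_ne_zero (key t ht).ne'
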